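/- A reflexive Banach space X has the local point property L_{p,p}-nu if and only if its dual X* has L_{p,p}-nu. -/

import Mathlib

noncomputable section

open Filter Topology

variable (𝕜 : Type*) [RCLike 𝕜] (X : Type*) [NormedAddCommGroup X] [NormedSpace 𝕜 X]

/-- `(x, f)` is a state of `X`: `x ∈ S_X`, `f ∈ S_{X*}`, `f x = 1`. -/
def IsState (x : X) (f : X →L[𝕜] 𝕜) : Prop :=
  ‖x‖ = 1 ∧ ‖f‖ = 1 ∧ f x = 1

/-- The numerical radius `v(T) = sup {|f (T x)| : (x, f) ∈ Π(X)}`. -/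
def nrad (T : X →L[𝕜] X) : ℝ :=
  sSup {r : ℝ | ∃ x f, IsState 𝕜 X x f ∧ r = ‖f (T x)‖}

/-- The numerical index `n(X) = inf {v(T) : ‖T‖ = 1}`. -/
def nindex : ℝ :=
  sInf {r : ℝ | ∃ T : X →L[𝕜] X, ‖T‖ = 1 ∧ r = nrad 𝕜 X T}

/-- The local point property L_{p,p}-nu. -/
def LppNu : Prop :=
  ∀ ε : ℝ, 0 < ε → ∀ (x : X) (f : X →L[𝕜] 𝕜), IsState 𝕜 X x f →
    ∃ η : ℝ, 0 < η ∧ ∀ T : X →L[𝕜] X, nrad 𝕜 X T = 1 → 1 - η < ‖f (T x)‖ →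
      ∃ S : X →L[𝕜] X, nrad 𝕜 X S = 1 ∧ ‖f (S x)‖ = 1 ∧ ‖S - T‖ < ε

open NormedSpace

/-- The Banach-space adjoint (dual map) `T ↦ T*`. -/
def dm (T : X →L[𝕜] X) : StrongDual 𝕜 X →L[𝕜] StrongDual 𝕜 X :=
  (ContinuousLinearMap.compL 𝕜 X X 𝕜).flip T

lemma dm_apply (T : X →L[𝕜] X) (g : StrongDual 𝕜 X) (x : X) :
    dm 𝕜 X T g x = g (T x) := rfl

lemma dm_sub (S T : X →L[𝕜] X) : dm 𝕜 X (S - T) = dm 𝕜 X S - dm 𝕜 X T :=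
  map_sub ((ContinuousLinearMap.compL 𝕜 X X 𝕜).flip) S T

lemma norm_dm (T : X →L[𝕜] X) : ‖dm 𝕜 X T‖ = ‖T‖ := by
  apply le_antisymm
  · refine ContinuousLinearMap.opNorm_le_bound _ (norm_nonneg T) fun g => ?_
    refine ContinuousLinearMap.opNorm_le_bound _
      (mul_nonneg (norm_nonneg T) (norm_nonneg g)) fun x => ?_
    rw [dm_apply]
    calc ‖g (T x)‖ ≤ ‖g‖ * ‖T x‖ := g.le_opNorm _
      _ ≤ ‖g‖ * (‖T‖ * ‖x‖) := by
          exact mul_le_mul_of_nonneg_left (T.le_opNorm x) (norm_nonneg g)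
      _ = ‖T‖ * ‖g‖ * ‖x‖ := by ring
  · refine ContinuousLinearMap.opNorm_le_bound _ (norm_nonneg (dm 𝕜 X T)) fun x => ?_
    by_cases h : T x = 0
    · simp [h, mul_nonneg (norm_nonneg (dm 𝕜 X T)) (norm_nonneg x)]
    · obtain ⟨f, hf1, hfx⟩ := exists_dual_vector 𝕜 (T x) (norm_ne_zero_iff.mpr h)
      calc ‖T x‖ = ‖f (T x)‖ := by rw [hfx]; simp
        _ = ‖dm 𝕜 X T f x‖ := rfl
        _ ≤ ‖dm 𝕜 X T f‖ * ‖x‖ := (dm 𝕜 X T f).le_opNorm x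
        _ ≤ ‖dm 𝕜 X T‖ * ‖f‖ * ‖x‖ := by
            exact mul_le_mul_of_nonneg_right ((dm 𝕜 X T).le_opNorm f) (norm_nonneg x)
        _ = ‖dm 𝕜 X T‖ * ‖x‖ := by rw [hf1, mul_one]

lemma norm_incl (x : X) : ‖inclusionInDoubleDual 𝕜 X x‖ = ‖x‖ :=
  (inclusionInDoubleDualLi 𝕜 (E := X)).norm_map x

lemma state_dual_of_state {x : X} {f : X →L[𝕜] 𝕜} (h : IsState 𝕜 X x f) :
    IsState 𝕜 (StrongDual 𝕜 X) f (inclusionInDoubleDual 𝕜 X x) := by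
  obtain ⟨hx, hf, hfx⟩ := h
  exact ⟨hf, by rw [norm_incl, hx], by simpa using hfx⟩

lemma state_of_state_dual
    (hrefl : Function.Surjective ⇑(NormedSpace.inclusionInDoubleDual 𝕜 X))
    {g : StrongDual 𝕜 X} {Φ : StrongDual 𝕜 (StrongDual 𝕜 X)} (h : IsState 𝕜 (StrongDual 𝕜 X) g Φ) :
    ∃ x : X, Φ = inclusionInDoubleDual 𝕜 X x ∧ IsState 𝕜 X x g := by
  obtain ⟨hg, hΦ, hΦg⟩ := h
  obtain ⟨x, hx⟩ := hrefl Φ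
  refine ⟨x, hx.symm, ?_, hg, ?_⟩
  · rw [← norm_incl 𝕜 X x, hx, hΦ]
  · have : Φ g = g x := by rw [← hx]; rfl
    rw [← this, hΦg]

lemma nrad_dm (hrefl : Function.Surjective ⇑(NormedSpace.inclusionInDoubleDual 𝕜 X))
    (T : X →L[𝕜] X) : nrad 𝕜 (StrongDual 𝕜 X) (dm 𝕜 X T) = nrad 𝕜 X T := by
  unfold nrad
  congr 1
  ext r
  constructor
  · rintro ⟨g, Φ, hst, rfl⟩
    obtain ⟨x, rfl, hst'⟩ := state_of_state_dual 𝕜 X hrefl hst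
    exact ⟨x, g, hst', by simp [dm_apply]⟩
  · rintro ⟨x, f, hst, rfl⟩
    exact ⟨f, inclusionInDoubleDual 𝕜 X x, state_dual_of_state 𝕜 X hst,
      by simp [dm_apply]⟩

lemma dm_surj (hrefl : Function.Surjective ⇑(NormedSpace.inclusionInDoubleDual 𝕜 X))
    (T' : StrongDual 𝕜 X →L[𝕜] StrongDual 𝕜 X) : ∃ T : X →L[𝕜] X, dm 𝕜 X T = T' := by
  have hsurj : Function.Surjective ⇑(inclusionInDoubleDualLi 𝕜 (E := X)) := hrefl
  let e : X ≃ₗᵢ[𝕜] StrongDual 𝕜 (StrongDual 𝕜 X) :=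
    LinearIsometryEquiv.ofSurjective (inclusionInDoubleDualLi 𝕜 (E := X)) hsurj
  refine ⟨((e.symm.toContinuousLinearEquiv : StrongDual 𝕜 (StrongDual 𝕜 X) →L[𝕜] X).comp
      ((dm 𝕜 (StrongDual 𝕜 X) T').comp
        (e.toContinuousLinearEquiv : X →L[𝕜] StrongDual 𝕜 (StrongDual 𝕜 X)))), ?_⟩
  ext g x
  show g (e.symm (dm 𝕜 (StrongDual 𝕜 X) T' (e x))) = T' g x
  set Φ : StrongDual 𝕜 (StrongDual 𝕜 X) := dm 𝕜 (StrongDual 𝕜 X) T' (e x) with hΦ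
  have key : ∀ y : X, ∀ h : StrongDual 𝕜 X, e y h = h y := fun y h => rfl
  have h1 : g (e.symm Φ) = e (e.symm Φ) g := (key _ g).symm
  rw [h1, e.apply_symm_apply]
  show (e x) (T' g) = T' g x
  exact key x (T' g)

/-- a reflexive Banach space `X` has L_{p,p}-nu iff `X*` has L_{p,p}-nu. -/
theorem stmt13 [CompleteSpace X]
    (hrefl : Function.Surjective ⇑(NormedSpace.inclusionInDoubleDual 𝕜 X)) :
    LppNu 𝕜 X ↔ LppNu 𝕜 (StrongDual 𝕜 X) := by
  constructor
  · intro h ε hε g Φ hst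
    obtain ⟨x, rfl, hst'⟩ := state_of_state_dual 𝕜 X hrefl hst
    obtain ⟨η, hη, H⟩ := h ε hε x g hst'
    refine ⟨η, hη, fun T' hT' hbig => ?_⟩
    obtain ⟨T, rfl⟩ := dm_surj 𝕜 X hrefl T'
    rw [nrad_dm 𝕜 X hrefl] at hT'
    have hbig' : 1 - η < ‖g (T x)‖ := by simpa [dm_apply] using hbig
    obtain ⟨S, hS1, hS2, hS3⟩ := H T hT' hbig'
    refine ⟨dm 𝕜 X S, nrad_dm 𝕜 X hrefl S ▸ hS1, by simpa [dm_apply] using hS2, ?_⟩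
    rw [← dm_sub, norm_dm]
    exact hS3
  · intro h ε hε x f hst
    obtain ⟨η, hη, H⟩ := h ε hε f (inclusionInDoubleDual 𝕜 X x)
      (state_dual_of_state 𝕜 X hst)
    refine ⟨η, hη, fun T hT hbig => ?_⟩
    have h1 : nrad 𝕜 (StrongDual 𝕜 X) (dm 𝕜 X T) = 1 := by rw [nrad_dm 𝕜 X hrefl, hT]
    have h2 : 1 - η < ‖inclusionInDoubleDual 𝕜 X x (dm 𝕜 X T f)‖ := by
      simpa [dm_apply] using hbig
    obtain ⟨S', hS1, hS2, hS3⟩ := H (dm 𝕜 X T) h1 h2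
    obtain ⟨S, rfl⟩ := dm_surj 𝕜 X hrefl S'
    rw [nrad_dm 𝕜 X hrefl] at hS1
    refine ⟨S, hS1, by simpa [dm_apply] using hS2, ?_⟩
    rw [← norm_dm 𝕜 X, dm_sub]
    exact hS3
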